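/- In the setting of the previous statement (U_λ ∘ i = U_τ, i creates weak equivalences, ε ∈ W_τ, and U_τ creates W_τ from V), the functor U_λ creates W_λ from V: a morphism f of C_λ lies in W_λ if and only if U_λ f ∈ V. -/
import Mathlib


open CategoryTheory

/-- In the same setting, `Ul` creates `Wl` from `V`:
a morphism `f` of `Cl` lies in `Wl` iff `Ul f ∈ V`. -/
theorem Ul_creates
    {Ct : Type*} [Category Ct] {Cl : Type*} [Category Cl] {K : Type*} [Category K]
    (Q : Cl ⥤ Ct) (i : Ct ⥤ Cl) (adj : Q ⊣ i)
    (Wt : MorphismProperty Ct) (Wl : MorphismProperty Cl) (V : MorphismProperty K)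
    (hWtiso : ∀ {X Y : Ct} (f : X ⟶ Y), IsIso f → Wt f)
    (hWliso : ∀ {X Y : Cl} (f : X ⟶ Y), IsIso f → Wl f)
    (hViso : ∀ {X Y : K} (f : X ⟶ Y), IsIso f → V f)
    [Wt.HasTwoOutOfThreeProperty] [Wl.HasTwoOutOfThreeProperty] [V.HasTwoOutOfThreeProperty]
    (hObj : Function.Surjective i.obj)
    (hCreate : ∀ {X Y : Ct} (f : X ⟶ Y), Wt f ↔ Wl (i.map f))
    (hCounit : ∀ A : Ct, Wt (adj.counit.app A))
    (Ut : Ct ⥤ K) (Ul : Cl ⥤ K) (hcomm : i ⋙ Ul = Ut)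
    (hWl : ∀ {X Y : Cl} (f : X ⟶ Y), Wl f ↔ Wt (Q.map f))
    (hUt : ∀ {X Y : Ct} (f : X ⟶ Y), Wt f ↔ V (Ut.map f)) :
    ∀ {X Y : Cl} (f : X ⟶ Y), Wl f ↔ V (Ul.map f) := by
  -- `V` is invariant under pre/post-composition with isomorphisms (via 2-out-of-3).
  have hVconj : ∀ {A B A' B' : K} (e : A' ⟶ A) (e' : B ⟶ B') (g : A ⟶ B)
      [IsIso e] [IsIso e'], V (e ≫ g ≫ e') ↔ V g := by
    intro A B A' B' e e' g _ _
    constructor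
    · intro h
      have h1 : V (g ≫ e') := V.of_precomp e (g ≫ e') (hViso e ‹_›) h
      exact V.of_postcomp g e' (hViso e' ‹_›) h1
    · intro h
      exact V.comp_mem _ _ (hViso e ‹_›) (V.comp_mem _ _ h (hViso e' ‹_›))
  -- `Ul (i g)` is in `V` iff `Ut g` is.
  have hUli : ∀ {A B : Ct} (g : A ⟶ B), V (Ul.map (i.map g)) ↔ V (Ut.map g) := by
    intro A B g
    have := Functor.congr_hom hcomm g
    simp only [Functor.comp_map] at this
    rw [this]
    exact hVconj _ _ _
  -- `Ul` sends every unit component into `V`.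
  have hUnit : ∀ X : Cl, V (Ul.map (adj.unit.app X)) := by
    intro X
    obtain ⟨A, rfl⟩ := hObj X
    have tri : adj.unit.app (i.obj A) ≫ i.map (adj.counit.app A) = 𝟙 (i.obj A) :=
      adj.right_triangle_components A
    have h1 : V (Ul.map (i.map (adj.counit.app A))) :=
      (hUli _).mpr ((hUt _).mp (hCounit A))
    have h2 : V (Ul.map (adj.unit.app (i.obj A)) ≫ Ul.map (i.map (adj.counit.app A))) := by
      rw [← Ul.map_comp, tri]
      exact hViso (Ul.map (𝟙 (i.obj A))) inferInstance
    exact V.of_postcomp _ _ h1 h2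
  intro X Y f
  have nat : adj.unit.app X ≫ i.map (Q.map f) = f ≫ adj.unit.app Y :=
    (adj.unit.naturality f).symm
  have key : V (Ul.map f) ↔ V (Ul.map (i.map (Q.map f))) := by
    constructor
    · intro h
      have : V (Ul.map (adj.unit.app X) ≫ Ul.map (i.map (Q.map f))) := by
        rw [← Ul.map_comp, nat, Ul.map_comp]
        exact V.comp_mem _ _ h (hUnit Y)
      exact V.of_precomp _ _ (hUnit X) this
    · intro h
      have : V (Ul.map f ≫ Ul.map (adj.unit.app Y)) := by
        rw [← Ul.map_comp, ← nat, Ul.map_comp]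
        exact V.comp_mem _ _ (hUnit X) h
      exact V.of_postcomp _ _ (hUnit Y) this
  rw [hWl f, hUt, ← hUli, key]
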